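/- Let l be an odd positive integer, h ≥ 1, g ≥ 0, r ≥ 0, m_1,...,m_r > 1 with m := lcm(m_1,...,m_r). Define H⁺(2d) for divisors d of l as the number of homomorphisms into Z_{2d} from the free-abelian-with-torsion-conditions data: tuples (u_i)_{i≤r}, (v_j)_{j≤h}, (c_j)_{j≤h}, (w_k)_{k≤2g} in Z_{2d} with ∑u_i + ∑v_j = 0, each u_i of exact order m_i, each c_j of exact order 2 and odd (i.e., c_j generates the odd coset), and all u_i, v_j, w_k even. Then H⁺(2d) = d^{2g+h-1}·∏φ(m_i) if d is odd and all m_i | d, and 0 otherwise; and consequently ∑_{d | l, l/d odd} μ(l/d)·H⁺(2d) = m^{2g+h-1}·J_{2g+h-1}(l/m)·∏_{i=1}^r φ(m_i) when m | l (and 0 when m ∤ l). -/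

import Mathlib

open ArithmeticFunction

/-- The Jordan totient function, as the Möbius inverse of `n ↦ n ^ k`:
`J_k(n) = ∑_{d ∣ n} μ(n/d) d^k`. -/
def jordanTotient (k n : ℕ) : ℤ :=
  ∑ d ∈ n.divisors, moebius (n / d) * (d : ℤ) ^ k

/-- `Hplus r h g m D` is the number of tuples `(u, v, c, w)` of elements of `ZMod D`
(`u : Fin r`, `v c : Fin h`, `w : Fin (2g)`) with `∑ u i + ∑ v j = 0`, each `u i` of
exact order `m i`, each `c j` of exact order `2` and odd, and all `u i`, `v j`, `w k`
even.  This is the number of orientation-and-order-preserving homomorphisms from the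
fundamental NEC-group of an orientable orbifold with `h` boundary components, `g` handles
and branch indices `m i` to `ZMod D`. -/
noncomputable def Hplus (r h g : ℕ) (m : Fin r → ℕ) (D : ℕ) : ℕ :=
  Nat.card
    {t : (Fin r → ZMod D) × (Fin h → ZMod D) × (Fin h → ZMod D) ×
          (Fin (2 * g) → ZMod D) //
      (∑ i, t.1 i) + (∑ j, t.2.1 j) = 0 ∧
      (∀ i, addOrderOf (t.1 i) = m i) ∧
      (∀ j, addOrderOf (t.2.2.1 j) = 2 ∧ ¬ Even (t.2.2.1 j).val) ∧
      (∀ i, Even (t.1 i).val) ∧ (∀ j, Even (t.2.1 j).val) ∧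
      (∀ k, Even (t.2.2.2 k).val)}

lemma card_ord (d : ℕ) (hd : 0 < d) (k : ℕ) :
    Nat.card {x : ZMod d // addOrderOf x = k} = if k ∣ d then Nat.totient k else 0 := by
  haveI : NeZero d := ⟨hd.ne'⟩
  rw [Nat.card_eq_fintype_card, Fintype.card_subtype]
  split_ifs with hk
  · have := IsAddCyclic.card_addOrderOf_eq_totient (α := ZMod d) (d := k)
      (by rwa [ZMod.card])
    simpa using this
  · rw [Finset.card_eq_zero, Finset.filter_eq_empty_iff]
    intro x _ hx
    exact hk (hx ▸ addOrderOf_dvd_card.trans (dvd_of_eq (ZMod.card d)))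

lemma Hplus_odd (r h' g : ℕ) (m : Fin r → ℕ) (d : ℕ) (hd : 0 < d) (hdo : Odd d) :
    Hplus r (h' + 1) g m (2 * d) =
      (∏ i, if m i ∣ d then Nat.totient (m i) else 0) * d ^ h' * d ^ (2 * g) := by
  haveI : NeZero (2 * d) := ⟨by omega⟩
  haveI : NeZero d := ⟨hd.ne'⟩
  set ψ := ZMod.chineseRemainder (Nat.coprime_two_left.mpr hdo) with hψdef
  have hψ : ∀ x : ZMod (2 * d), ψ x = ((x.val : ZMod 2), (x.val : ZMod d)) := by
    intro x
    have : ψ x = ZMod.castHom (show Nat.lcm 2 d ∣ 2 * d by simp [Nat.lcm_dvd_iff])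
        (ZMod 2 × ZMod d) x := rfl
    rw [this, ZMod.castHom_apply, ← ZMod.natCast_val]
    rfl
  have heven : ∀ x : ZMod (2 * d), Even x.val ↔ (ψ x).1 = 0 := by
    intro x
    rw [hψ x]
    simp only []
    rw [ZMod.natCast_eq_zero_iff]
    exact ⟨fun ⟨k, hk⟩ => ⟨k, by omega⟩, fun ⟨k, hk⟩ => ⟨k, by omega⟩⟩
  -- the embedding of ZMod d as the even part
  set ι : ZMod d →+ ZMod (2 * d) :=
    (ψ.symm.toAddEquiv.toAddMonoidHom).comp (AddMonoidHom.inr (ZMod 2) (ZMod d)) with hιdef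
  have hι : ∀ y : ZMod d, ι y = ψ.symm (0, y) := fun y => rfl
  have hιinj : Function.Injective ι := by
    intro a b hab
    rw [hι, hι] at hab
    have := ψ.symm.injective hab
    exact (Prod.mk.injEq _ _ _ _).mp this |>.2
  have hι_even : ∀ y : ZMod d, Even (ι y).val := by
    intro y
    rw [heven, hι, RingEquiv.apply_symm_apply]
  have hι_ord : ∀ y : ZMod d, addOrderOf (ι y) = addOrderOf y :=
    addOrderOf_injective ι hιinj
  have hι_apply : ∀ x : ZMod (2 * d), Even x.val → ι ((ψ x).2) = x := by
    intro x hx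
    rw [hι]
    have h1 : (ψ x).1 = 0 := (heven x).mp hx
    rw [← h1]
    exact ψ.symm_apply_apply x
  have hψι : ∀ y : ZMod d, (ψ (ι y)).2 = y := by
    intro y; rw [hι, RingEquiv.apply_symm_apply]
  -- the unique odd element of order two
  set cc : ZMod (2 * d) := ψ.symm (1, 0) with hccdef
  have hcc : ∀ x : ZMod (2 * d), (addOrderOf x = 2 ∧ ¬ Even x.val) ↔ x = cc := by
    intro x
    constructor
    · rintro ⟨h2, hodd⟩
      have hfst : (ψ x).1 = 1 := by
        have : (ψ x).1 ≠ 0 := fun hzero => hodd ((heven x).mpr hzero)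
        revert this; generalize (ψ x).1 = a; fin_cases a <;> intro ha <;> [exact absurd rfl ha; rfl]
      have hsnd : (ψ x).2 = 0 := by
        have hx2 : (2 : ℕ) • x = 0 := by
          have := addOrderOf_nsmul_eq_zero x
          rwa [h2] at this
        have : (2 : ℕ) • (ψ x).2 = 0 := by
          have h' := congrArg ψ hx2
          rw [map_nsmul, _root_.map_zero] at h'
          simpa using congrArg Prod.snd h'
        have hdvd2 : addOrderOf (ψ x).2 ∣ 2 := addOrderOf_dvd_of_nsmul_eq_zero this
        have hdvdd : addOrderOf (ψ x).2 ∣ d :=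
          addOrderOf_dvd_card.trans (dvd_of_eq (ZMod.card d))
        have : addOrderOf (ψ x).2 ∣ Nat.gcd 2 d := Nat.dvd_gcd hdvd2 hdvdd
        rw [Nat.coprime_two_left.mpr hdo] at this
        rw [← AddMonoid.addOrderOf_eq_one_iff]
        exact Nat.dvd_one.mp this
      have : ψ x = (1, 0) := Prod.ext hfst hsnd
      rw [hccdef, ← this, RingEquiv.symm_apply_apply]
    · rintro rfl
      constructor
      · have : ψ cc = (1, 0) := by rw [hccdef, RingEquiv.apply_symm_apply]
        have ho : addOrderOf (ψ cc) = 2 := by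
          rw [this, Prod.addOrderOf]
          simp [addOrderOf_eq_prime (p := 2) (show 2 • (1 : ZMod 2) = 0 by decide)
            (by decide)]
        have hoc : addOrderOf (ψ cc) = addOrderOf cc :=
          addOrderOf_injective (AddMonoidHom.mk' ψ (map_add ψ)) ψ.injective cc
        rw [← hoc]; exact ho
      · intro hev
        have := (heven cc).mp hev
        rw [hccdef, RingEquiv.apply_symm_apply] at this
        simp at this
  -- the main equivalence
  let e : {t : (Fin r → ZMod (2 * d)) × (Fin (h' + 1) → ZMod (2 * d)) ×
        (Fin (h' + 1) → ZMod (2 * d)) × (Fin (2 * g) → ZMod (2 * d)) //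
      (∑ i, t.1 i) + (∑ j, t.2.1 j) = 0 ∧
      (∀ i, addOrderOf (t.1 i) = m i) ∧
      (∀ j, addOrderOf (t.2.2.1 j) = 2 ∧ ¬ Even (t.2.2.1 j).val) ∧
      (∀ i, Even (t.1 i).val) ∧ (∀ j, Even (t.2.1 j).val) ∧
      (∀ k, Even (t.2.2.2 k).val)} ≃
      (∀ i, {x : ZMod d // addOrderOf x = m i}) × (Fin h' → ZMod d) ×
        (Fin (2 * g) → ZMod d) :=
  { toFun := fun t =>
      (fun i => ⟨(ψ (t.1.1 i)).2, by
        rw [← hι_ord ((ψ (t.1.1 i)).2), hι_apply _ (t.2.2.2.2.1 i)]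
        exact t.2.2.1 i⟩,
       fun j => (ψ (t.1.2.1 j.succ)).2,
       fun k => (ψ (t.1.2.2.2 k)).2)
    invFun := fun p =>
      ⟨(fun i => ι (p.1 i).1,
        Fin.cons (ι (-(∑ i, (p.1 i).1) - ∑ j, p.2.1 j)) (fun j => ι (p.2.1 j)),
        fun _ => cc,
        fun k => ι (p.2.2 k)), by
          have key : (∑ i, (p.1 i).1) +
              ((-(∑ i, (p.1 i).1) - ∑ j, p.2.1 j) + ∑ j, p.2.1 j) = 0 := by ring
          simp only [Fin.sum_univ_succ, Fin.cons_succ, Fin.cons_zero, ← map_sum,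
            ← map_add, key, _root_.map_zero], fun i => by
          rw [hι_ord]; exact (p.1 i).2, fun j => (hcc cc).mpr rfl,
        fun i => hι_even _, fun j => by
          refine Fin.cases ?_ (fun i => ?_) j <;>
            simp only [Fin.cons_zero, Fin.cons_succ] <;> exact hι_even _,
        fun k => hι_even _⟩
    left_inv := by
      rintro ⟨⟨u, v, c, w⟩, hsum, hords, hcs, heu, hev, hew⟩
      apply Subtype.ext
      have h1 : (fun i => ι ((ψ (u i)).2)) = u := funext fun i => hι_apply _ (heu i)
      have hs2 : (∑ i, (ψ (u i)).2) + ∑ j, (ψ (v j)).2 = 0 := by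
        have h' := congrArg ψ hsum
        rw [map_add, map_sum, map_sum, _root_.map_zero] at h'
        simpa [Prod.snd_sum] using congrArg Prod.snd h'
      rw [Fin.sum_univ_succ] at hs2
      have h2 : Fin.cons (ι (-(∑ i, (ψ (u i)).2) - ∑ j : Fin h', (ψ (v j.succ)).2))
          (fun j => ι ((ψ (v j.succ)).2)) = v := by
        funext j
        refine Fin.cases ?_ (fun i => ?_) j
        · rw [Fin.cons_zero, ← hι_apply (v 0) (hev 0)]
          congr 1
          linear_combination -hs2
        · rw [Fin.cons_succ]
          exact hι_apply _ (hev _)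
      have h3 : (fun _ : Fin (h' + 1) => cc) = c :=
        funext fun j => ((hcc (c j)).mp (hcs j)).symm
      have h4 : (fun k => ι ((ψ (w k)).2)) = w := funext fun k => hι_apply _ (hew k)
      dsimp only
      rw [h1, h2, h3, h4]
    right_inv := by
      rintro ⟨a, t, w⟩
      refine Prod.ext ?_ (Prod.ext ?_ ?_)
      · funext i
        exact Subtype.ext (hψι _)
      · funext j
        simp only [Fin.cons_succ]
        exact hψι _
      · funext k
        exact hψι _ }
  unfold Hplus
  rw [Nat.card_congr e, Nat.card_prod, Nat.card_prod, Nat.card_pi, Nat.card_fun,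
    Nat.card_fun, Nat.card_zmod, Nat.card_eq_fintype_card (α := Fin h'),
    Nat.card_eq_fintype_card (α := Fin (2 * g)), Fintype.card_fin, Fintype.card_fin]
  have hprod : ∏ i, Nat.card {x : ZMod d // addOrderOf x = m i} =
      ∏ i, if m i ∣ d then Nat.totient (m i) else 0 :=
    Finset.prod_congr rfl fun i _ => card_ord d hd (m i)
  rw [hprod]
  ring


lemma Hplus_even (r h g : ℕ) (m : Fin r → ℕ) (d : ℕ) (hd : 0 < d) (hh : 1 ≤ h)
    (hde : ¬ Odd d) : Hplus r h g m (2 * d) = 0 := by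
  haveI : NeZero (2 * d) := ⟨by omega⟩
  rw [Hplus, Nat.card_eq_zero]
  left
  constructor
  rintro ⟨t, -, -, hcs, -⟩
  obtain ⟨h2, hodd⟩ := hcs ⟨0, hh⟩
  set x : ZMod (2 * d) := t.2.2.1 ⟨0, hh⟩ with hx
  have hx2 : (2 : ℕ) • x = 0 := by
    have := addOrderOf_nsmul_eq_zero x
    rwa [h2] at this
  have hmul : (2 : ZMod (2 * d)) * x = 0 := by
    rw [show ((2 : ZMod (2*d))) = ((2 : ℕ) : ZMod (2*d)) by push_cast; ring, ← nsmul_eq_mul]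
    exact hx2
  have hcast : ((2 * x.val : ℕ) : ZMod (2 * d)) = 0 := by
    push_cast
    rw [ZMod.natCast_zmod_val]
    exact hmul
  have hdvd : 2 * d ∣ 2 * x.val := (ZMod.natCast_eq_zero_iff _ _).mp hcast
  have hdv : d ∣ x.val := by
    obtain ⟨k, hk⟩ := hdvd
    refine ⟨k, ?_⟩
    have hk' : 2 * x.val = 2 * (d * k) := by rw [hk]; ring
    omega
  have hlt : x.val < 2 * d := ZMod.val_lt x
  have hd2 : d % 2 = 0 := Nat.even_iff.mp (Nat.not_odd_iff_even.mp hde)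
  have hv2 : x.val % 2 = 1 := Nat.odd_iff.mp (Nat.not_even_iff_odd.mp hodd)
  obtain ⟨k, hk⟩ := hdv
  have hklt : k < 2 := by
    rcases Nat.lt_or_ge k 2 with h' | h'
    · exact h'
    · exfalso
      have : d * 2 ≤ d * k := Nat.mul_le_mul_left d h'
      linarith
  interval_cases k <;> omega


/-- For odd `l`, `h ≥ 1` and branch indices `m i > 1` with `M = lcm (m i)`:
`Hplus r h g m (2d) = d^(2g+h-1) ∏ φ(m i)` if `d` is odd and all `m i ∣ d`, and `0`
otherwise; consequently `∑_{d ∣ l, l/d odd} μ(l/d) · Hplus r h g m (2d) =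
M^(2g+h-1) J_(2g+h-1)(l/M) ∏ φ(m i)` when `M ∣ l`, and `0` when `M ∤ l`. -/
theorem stmt_15 (l : ℕ) (hl : 0 < l) (hlodd : Odd l) (h g r : ℕ) (hh : 1 ≤ h)
    (m : Fin r → ℕ) (hm : ∀ i, 1 < m i) :
    (∀ d : ℕ, 0 < d →
      Hplus r h g m (2 * d) =
        if Odd d ∧ ∀ i, m i ∣ d then d ^ (2 * g + h - 1) * ∏ i, Nat.totient (m i)
        else 0) ∧
    (∑ d ∈ l.divisors.filter (fun d => Odd (l / d)),
        moebius (l / d) * (Hplus r h g m (2 * d) : ℤ)) =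
      (if Finset.univ.lcm m ∣ l then
        ((Finset.univ.lcm m : ℕ) : ℤ) ^ (2 * g + h - 1) *
          jordanTotient (2 * g + h - 1) (l / Finset.univ.lcm m) *
          ∏ i, (Nat.totient (m i) : ℤ)
      else 0) := by
  have part1 : ∀ d : ℕ, 0 < d → Hplus r h g m (2 * d) =
      if Odd d ∧ ∀ i, m i ∣ d then d ^ (2 * g + h - 1) * ∏ i, Nat.totient (m i) else 0 := by
    intro d hd
    by_cases hodd : Odd d
    · obtain ⟨h', rfl⟩ : ∃ h', h = h' + 1 := ⟨h - 1, by omega⟩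
      rw [Hplus_odd r h' g m d hd hodd]
      by_cases hall : ∀ i, m i ∣ d
      · rw [if_pos ⟨hodd, hall⟩]
        have hp : (∏ i, if m i ∣ d then Nat.totient (m i) else 0) = ∏ i, Nat.totient (m i) :=
          Finset.prod_congr rfl fun i _ => if_pos (hall i)
        rw [hp]
        have he : 2 * g + (h' + 1) - 1 = 2 * g + h' := by omega
        rw [he, pow_add]
        ring
      · rw [if_neg (fun hc => hall hc.2)]
        push_neg at hall
        obtain ⟨i, hi⟩ := hall
        rw [Finset.prod_eq_zero (Finset.mem_univ i)
          (show (if m i ∣ d then Nat.totient (m i) else 0) = 0 from if_neg hi)]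
        ring
    · rw [Hplus_even r h g m d hd hh hodd, if_neg (fun hc => hodd hc.1)]
  refine ⟨part1, ?_⟩
  set M := Finset.univ.lcm m with hM
  set K := 2 * g + h - 1 with hK
  have hMdvd : ∀ d : ℕ, (∀ i, m i ∣ d) ↔ M ∣ d := fun d =>
    ⟨fun hall => Finset.lcm_dvd fun i _ => hall i,
     fun hMd i => (Finset.dvd_lcm (Finset.mem_univ i)).trans hMd⟩
  have hfilter : l.divisors.filter (fun d => Odd (l / d)) = l.divisors := by
    apply Finset.filter_true_of_mem
    intro d hd
    obtain ⟨c, hc⟩ := Nat.div_dvd_of_dvd (Nat.mem_divisors.mp hd).1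
    exact (Nat.odd_mul.mp (hc ▸ hlodd)).1
  rw [hfilter]
  have hterm : ∀ d ∈ l.divisors, moebius (l / d) * (Hplus r h g m (2 * d) : ℤ)
      = if M ∣ d then moebius (l / d) * ((d : ℤ) ^ K * ∏ i, ((m i).totient : ℤ)) else 0 := by
    intro d hd
    have hdpos : 0 < d := Nat.pos_of_mem_divisors hd
    have hdodd : Odd d := by
      obtain ⟨c, hc⟩ := (Nat.mem_divisors.mp hd).1
      exact (Nat.odd_mul.mp (hc ▸ hlodd)).1
    rw [part1 d hdpos]
    by_cases hMd : M ∣ d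
    · rw [if_pos ⟨hdodd, (hMdvd d).mpr hMd⟩, if_pos hMd]
      push_cast
      ring
    · rw [if_neg (fun hc => hMd ((hMdvd d).mp hc.2)), if_neg hMd]
      push_cast
      ring
  rw [Finset.sum_congr rfl hterm]
  by_cases hMl : M ∣ l
  · rw [if_pos hMl, ← Finset.sum_filter]
    have hMpos : 0 < M := Nat.pos_of_dvd_of_pos hMl hl
    have hre : ∑ d ∈ l.divisors.filter (fun d => M ∣ d),
        (moebius (l / d) * ((d : ℤ) ^ K * ∏ i, ((m i).totient : ℤ))) =
        ∑ e ∈ (l / M).divisors,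
          (moebius ((l / M) / e) * (((M * e : ℕ) : ℤ) ^ K * ∏ i, ((m i).totient : ℤ))) := by
      refine Finset.sum_nbij' (fun d => d / M) (fun e => M * e) ?_ ?_ ?_ ?_ ?_
      · intro a ha
        simp only [Finset.mem_filter, Nat.mem_divisors] at ha
        obtain ⟨⟨hal, hl0⟩, hMa⟩ := ha
        rw [Nat.mem_divisors]
        constructor
        · obtain ⟨a', rfl⟩ := hMa
          obtain ⟨l', hl'⟩ := hMl
          rw [hl', Nat.mul_div_cancel_left _ hMpos, Nat.mul_div_cancel_left _ hMpos]
          rw [hl'] at hal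
          exact (Nat.mul_dvd_mul_iff_left hMpos).mp hal
        · have : 0 < l / M := Nat.div_pos (Nat.le_of_dvd hl hMl) hMpos
          omega
      · intro e he
        rw [Nat.mem_divisors] at he
        obtain ⟨hel, _⟩ := he
        simp only [Finset.mem_filter, Nat.mem_divisors]
        refine ⟨⟨?_, by omega⟩, Dvd.intro e rfl⟩
        have : M * e ∣ M * (l / M) := Nat.mul_dvd_mul_left M hel
        rwa [Nat.mul_div_cancel' hMl] at this
      · intro a ha
        simp only [Finset.mem_filter] at ha
        exact Nat.mul_div_cancel' ha.2
      · intro e _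
        exact Nat.mul_div_cancel_left e hMpos
      · intro a ha
        simp only [Finset.mem_filter, Nat.mem_divisors] at ha
        obtain ⟨⟨hal, hl0⟩, hMa⟩ := ha
        rw [Nat.mul_div_cancel' hMa]
        congr 2
        obtain ⟨a', rfl⟩ := hMa
        obtain ⟨l', hl'⟩ := hMl
        rw [hl', Nat.mul_div_cancel_left _ hMpos, Nat.mul_div_cancel_left _ hMpos,
          Nat.mul_div_mul_left _ _ hMpos]
    rw [hre, jordanTotient, Finset.mul_sum, Finset.sum_mul]
    refine Finset.sum_congr rfl fun e he => ?_
    push_cast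
    ring
  · rw [if_neg hMl]
    apply Finset.sum_eq_zero
    intro d hd
    rw [if_neg]
    intro hMd
    exact hMl (hMd.trans (Nat.mem_divisors.mp hd).1)
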